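/- Suppose b : [s₀,∞) → (0,∞) is C¹ and satisfies |b_s + c₁b²| ≤ C/s³ with b(s₀) = 1/(c₁s₀), for constants c₁ > 0, C > 0. Then for s₀ sufficiently large, |−1/b(s) + c₁ s| ≤ √s for all s ≥ s₀, and in particular 1/(2c₁ s) < b(s) < 2/(c₁ s). -/

import Mathlib

open Real

set_option maxHeartbeats 1000000 in
/-- If `b` is positive, `C¹`, satisfies `|b_s + c₁ b²| ≤ C/s³` on `[s₀,∞)` with
`b(s₀) = 1/(c₁ s₀)`, then for `s₀` large enough,
`|-1/b(s) + c₁ s| ≤ √s` and `1/(2c₁ s) < b(s) < 2/(c₁ s)` for all `s ≥ s₀`. -/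
theorem b_parameter_law (c₁ C : ℝ) (hc₁ : 0 < c₁) (hC : 0 < C) :
    ∃ S₀ : ℝ, 0 < S₀ ∧
      ∀ s₀ : ℝ, S₀ ≤ s₀ →
      ∀ b : ℝ → ℝ, ContDiff ℝ 1 b →
        (∀ s, s₀ ≤ s → 0 < b s) →
        (∀ s, s₀ ≤ s → |deriv b s + c₁ * (b s) ^ 2| ≤ C / s ^ 3) →
        b s₀ = 1 / (c₁ * s₀) →
        ∀ s, s₀ ≤ s →
          |(-(1 / b s)) + c₁ * s| ≤ Real.sqrt s
          ∧ 1 / (2 * c₁ * s) < b s ∧ b s < 2 / (c₁ * s) := by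
  set K : ℝ := 4 * C * c₁ ^ 2 with hKdef
  have hKpos : 0 < K := by positivity
  refine ⟨4 / c₁ ^ 2 + 1 / c₁ ^ 2 + 4 * K ^ 2 + 1, by positivity, ?_⟩
  intro s₀ hs₀ b hb hbpos hbODE hbinit
  -- basic facts about points s ≥ s₀
  have hs₀1 : 1 ≤ s₀ := by nlinarith [sq_nonneg c₁, div_pos (by norm_num : (0:ℝ)<4) (by positivity : (0:ℝ) < c₁^2), div_pos (by norm_num : (0:ℝ)<1) (by positivity : (0:ℝ) < c₁^2), sq_nonneg K]
  have hfacts : ∀ s, s₀ ≤ s → 1 ≤ s ∧ 4 < c₁ ^ 2 * s ∧ 4 * K ^ 2 ≤ s := by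
    intro s hs
    have h1 : 1 ≤ s := le_trans hs₀1 hs
    have h4 : 4 / c₁ ^ 2 + 1 / c₁ ^ 2 + 4 * K ^ 2 + 1 ≤ s := le_trans hs₀ hs
    refine ⟨h1, ?_, ?_⟩
    · have : 4 / c₁ ^ 2 < s := by nlinarith [sq_nonneg K, div_pos (by norm_num : (0:ℝ)<1) (by positivity : (0:ℝ) < c₁^2)]
      calc (4:ℝ) = c₁ ^ 2 * (4 / c₁ ^ 2) := by field_simp
        _ < c₁ ^ 2 * s := by exact mul_lt_mul_of_pos_left this (by positivity)
    · nlinarith [div_pos (by norm_num : (0:ℝ)<4) (by positivity : (0:ℝ) < c₁^2), div_pos (by norm_num : (0:ℝ)<1) (by positivity : (0:ℝ) < c₁^2)]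
  -- sqrt facts
  have hsqrt : ∀ s, s₀ ≤ s → 2 * Real.sqrt s < c₁ * s := by
    intro s hs
    obtain ⟨h1, h4, _⟩ := hfacts s hs
    have hspos : (0:ℝ) < s := by linarith
    have hq : Real.sqrt s ^ 2 = s := Real.sq_sqrt hspos.le
    have hqpos : 0 < Real.sqrt s := Real.sqrt_pos.mpr hspos
    -- c₁ * sqrt s > 2
    have h2 : 2 < c₁ * Real.sqrt s := by
      nlinarith [hq, hqpos, mul_pos hc₁ hqpos]
    have h1s : 1 ≤ Real.sqrt s := by
      rw [show (1:ℝ) = Real.sqrt 1 by simp]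
      exact Real.sqrt_le_sqrt h1
    nlinarith [hq, hqpos]
  set g : ℝ → ℝ := fun s => c₁ * s - (b s)⁻¹ with hgdef
  have hbinv : (b s₀)⁻¹ = c₁ * s₀ := by
    rw [hbinit]
    have : c₁ * s₀ ≠ 0 := by positivity
    field_simp
  have hg0 : g s₀ = 0 := by simp [hgdef, hbinv]
  have hbcont : Continuous b := hb.continuous
  have hbdiff : Differentiable ℝ b := hb.differentiable one_ne_zero
  have hgcont : ContinuousOn g (Set.Ici s₀) := by
    apply ContinuousOn.sub (by fun_prop)
    exact ContinuousOn.inv₀ hbcont.continuousOn (fun x hx => (hbpos x hx).ne')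
  -- derivative of g
  have hgderiv : ∀ x, s₀ ≤ x → HasDerivAt g (c₁ + deriv b x / (b x) ^ 2) x := by
    intro x hx
    have h1 : HasDerivAt (fun s => c₁ * s) c₁ x := by
      simpa using (hasDerivAt_id x).const_mul c₁
    have h2 : HasDerivAt (fun s => (b s)⁻¹) (-(deriv b x) / (b x) ^ 2) x :=
      ((hbdiff x).hasDerivAt).inv (hbpos x hx).ne'
    have := h1.sub h2
    exact this.congr_deriv (by ring)
  -- the derivative bound, assuming |g x| ≤ √x
  have hderivbound : ∀ x, s₀ ≤ x → |g x| ≤ Real.sqrt x → |deriv g x| ≤ K / x := by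
    intro x hx hgx
    obtain ⟨h1, h4, _⟩ := hfacts x hx
    have hxpos : (0:ℝ) < x := by linarith
    have hbx := hbpos x hx
    have hD := (hgderiv x hx).deriv
    have hODE := hbODE x hx
    have hs2 := hsqrt x hx
    -- (b x)⁻¹ ≤ 2 c₁ x
    have hinv : (b x)⁻¹ ≤ 2 * c₁ * x := by
      have : (b x)⁻¹ - c₁ * x ≤ Real.sqrt x := by
        have := abs_le.mp hgx
        simp only [hgdef] at this
        linarith [this.1]
      nlinarith [Real.sqrt_nonneg x]
    have hbge : 1 / (2 * c₁ * x) ≤ b x := by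
      rw [div_le_iff₀ (by positivity)]
      have h2 : 0 < (b x)⁻¹ := by positivity
      calc (1:ℝ) = b x * (b x)⁻¹ := by field_simp
        _ ≤ b x * (2 * c₁ * x) := by exact mul_le_mul_of_nonneg_left hinv hbx.le
    rw [hD]
    have heq : c₁ + deriv b x / (b x) ^ 2 = (deriv b x + c₁ * (b x) ^ 2) / (b x) ^ 2 := by
      field_simp
      ring
    rw [heq, abs_div, abs_of_pos (by positivity : (0:ℝ) < (b x)^2)]
    rw [div_le_div_iff₀ (by positivity) hxpos]
    have hb2 : 1 / (4 * c₁ ^ 2 * x ^ 2) ≤ b x ^ 2 := by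
      have h0 : (0:ℝ) < 1 / (2 * c₁ * x) := by positivity
      have h := mul_self_le_mul_self h0.le hbge
      calc 1 / (4 * c₁ ^ 2 * x ^ 2) = (1 / (2 * c₁ * x)) * (1 / (2 * c₁ * x)) := by
            field_simp; ring
        _ ≤ b x * b x := h
        _ = b x ^ 2 := by ring
    calc |deriv b x + c₁ * b x ^ 2| * x ≤ (C / x ^ 3) * x := by
          exact mul_le_mul_of_nonneg_right hODE hxpos.le
      _ = C / x ^ 2 := by field_simp
      _ = K * (1 / (4 * c₁ ^ 2 * x ^ 2)) := by field_simp [hKdef]; ring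
      _ ≤ K * (b x ^ 2) := mul_le_mul_of_nonneg_left hb2 hKpos.le
      _ = K * b x ^ 2 := by ring
  -- main estimate: |g s| ≤ √s for all s ≥ s₀
  have main : ∀ s, s₀ ≤ s → |g s| ≤ Real.sqrt s := by
    by_contra hcon
    push_neg at hcon
    obtain ⟨s₁, hs₁, hbad1⟩ := hcon
    set B : Set ℝ := {s | s₀ ≤ s ∧ Real.sqrt s < |g s|} with hBdef
    have hBne : B.Nonempty := ⟨s₁, hs₁, hbad1⟩
    have hBbd : BddBelow B := ⟨s₀, fun x hx => hx.1⟩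
    set τ := sInf B with hτdef
    have hτ₁ : s₀ ≤ τ := le_csInf hBne fun x hx => hx.1
    have hgood : ∀ s, s₀ ≤ s → s < τ → |g s| ≤ Real.sqrt s := by
      intro s hs hlt
      by_contra h
      push_neg at h
      exact absurd (csInf_le hBbd ⟨hs, h⟩) (not_le.mpr hlt)
    have habscont : ContinuousOn (fun s => |g s| - Real.sqrt s) (Set.Ici s₀) :=
      hgcont.abs.sub Real.continuous_sqrt.continuousOn
    have hτmem : τ ∈ closure B := (isGLB_csInf hBne hBbd).mem_closure hBne
    have hbadτ : Real.sqrt τ ≤ |g τ| := by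
      have hclosed : IsClosed (Set.Ici s₀ ∩ (fun s => |g s| - Real.sqrt s) ⁻¹' Set.Ici 0) :=
        habscont.preimage_isClosed_of_isClosed isClosed_Ici isClosed_Ici
      have hsub : B ⊆ Set.Ici s₀ ∩ (fun s => |g s| - Real.sqrt s) ⁻¹' Set.Ici 0 := by
        intro x hx
        refine ⟨hx.1, ?_⟩
        simp only [Set.mem_preimage, Set.mem_Ici]
        linarith [hx.2]
      have h2 := (closure_minimal hsub hclosed hτmem).2
      simp only [Set.mem_preimage, Set.mem_Ici] at h2
      linarith
    have hτpos : 0 < τ := lt_of_lt_of_le (by linarith) hτ₁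
    have hsq₀pos : 0 < Real.sqrt s₀ := Real.sqrt_pos.mpr (by linarith)
    have hτlt : s₀ < τ := by
      rcases lt_or_eq_of_le hτ₁ with h | h
      · exact h
      · exfalso
        rw [← h, hg0] at hbadτ
        simp at hbadτ
        linarith
    have hgoodτ : |g τ| ≤ Real.sqrt τ := by
      have hclosed2 : IsClosed (Set.Ici s₀ ∩ (fun s => |g s| - Real.sqrt s) ⁻¹' Set.Iic 0) :=
        habscont.preimage_isClosed_of_isClosed isClosed_Ici isClosed_Iic
      have hsub : Set.Ico s₀ τ ⊆ Set.Ici s₀ ∩ (fun s => |g s| - Real.sqrt s) ⁻¹' Set.Iic 0 := by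
        intro x hx
        refine ⟨hx.1, ?_⟩
        simp only [Set.mem_preimage, Set.mem_Iic]
        linarith [hgood x hx.1 hx.2]
      have hmemcl : τ ∈ closure (Set.Ico s₀ τ) := by
        rw [closure_Ico (ne_of_lt hτlt)]
        exact Set.right_mem_Icc.mpr hτlt.le
      have h2 := (closure_minimal hsub hclosed2 hmemcl).2
      simp only [Set.mem_preimage, Set.mem_Iic] at h2
      linarith
    have hIcc : ∀ s ∈ Set.Icc s₀ τ, |g s| ≤ Real.sqrt s := by
      intro s hs
      rcases lt_or_eq_of_le hs.2 with h | h
      · exact hgood s hs.1 h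
      · rw [h]; exact hgoodτ
    -- continuity pieces on Icc s₀ τ
    have hpos' : ∀ x ∈ Set.Icc s₀ τ, (0:ℝ) < x := fun x hx => by
      have := (hfacts x hx.1).1; linarith
    have hlogcont : ContinuousOn (fun s : ℝ => K * Real.log s) (Set.Icc s₀ τ) := by
      apply continuousOn_const.mul
      exact Real.continuousOn_log.mono fun x hx => ne_of_gt (hpos' x hx)
    have hgcont' : ContinuousOn g (Set.Icc s₀ τ) := hgcont.mono fun x hx => hx.1
    -- antitone argument for g - K log and -g - K log
    have hanti : ∀ (ε : ℝ), ε = 1 ∨ ε = -1 →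
        AntitoneOn (fun s => ε * g s - K * Real.log s) (Set.Icc s₀ τ) := by
      intro ε hε
      apply antitoneOn_of_deriv_nonpos (convex_Icc s₀ τ)
      · exact (continuousOn_const.mul hgcont').sub hlogcont
      · intro x hx
        rw [interior_Icc] at hx
        have hx0 : x ≠ 0 := ne_of_gt (hpos' x ⟨hx.1.le, hx.2.le⟩)
        exact (((hgderiv x hx.1.le).const_mul ε).sub
          ((Real.hasDerivAt_log hx0).const_mul K)).differentiableAt.differentiableWithinAt
      · intro x hx
        rw [interior_Icc] at hx
        have hxpos : 0 < x := hpos' x ⟨hx.1.le, hx.2.le⟩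
        have hx0 : x ≠ 0 := ne_of_gt hxpos
        have hgd : HasDerivAt g (deriv g x) x := (hgderiv x hx.1.le).differentiableAt.hasDerivAt
        have hD : HasDerivAt (fun s => ε * g s - K * Real.log s)
            (ε * deriv g x - K * x⁻¹) x :=
          (hgd.const_mul ε).sub ((Real.hasDerivAt_log hx0).const_mul K)
        rw [hD.deriv]
        have hbd := hderivbound x hx.1.le (hIcc x ⟨hx.1.le, hx.2.le⟩)
        have h1 : ε * deriv g x ≤ |deriv g x| := by
          rcases hε with h | h
          · rw [h, one_mul]; exact le_abs_self _
          · rw [h, neg_one_mul]; exact neg_le_abs _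
        have : K * x⁻¹ = K / x := by ring
        rw [this]
        linarith
    have hmemτ : τ ∈ Set.Icc s₀ τ := Set.right_mem_Icc.mpr hτlt.le
    have hmems₀ : s₀ ∈ Set.Icc s₀ τ := Set.left_mem_Icc.mpr hτlt.le
    have hup : g τ ≤ K * (Real.log τ - Real.log s₀) := by
      have := hanti 1 (Or.inl rfl) hmems₀ hmemτ hτlt.le
      simp only [one_mul] at this
      rw [hg0] at this
      linarith
    have hdown : -g τ ≤ K * (Real.log τ - Real.log s₀) := by
      have := hanti (-1) (Or.inr rfl) hmems₀ hmemτ hτlt.le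
      simp only [neg_one_mul] at this
      rw [hg0] at this
      linarith
    -- sqrt grows faster than K log
    have hmono : MonotoneOn (fun s => Real.sqrt s - K * Real.log s) (Set.Icc s₀ τ) := by
      apply monotoneOn_of_deriv_nonneg (convex_Icc s₀ τ)
      · exact (Real.continuous_sqrt.continuousOn).sub hlogcont
      · intro x hx
        rw [interior_Icc] at hx
        have hx0 : x ≠ 0 := ne_of_gt (hpos' x ⟨hx.1.le, hx.2.le⟩)
        exact ((Real.hasDerivAt_sqrt hx0).sub
          ((Real.hasDerivAt_log hx0).const_mul K)).differentiableAt.differentiableWithinAt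
      · intro x hx
        rw [interior_Icc] at hx
        have hxpos : 0 < x := hpos' x ⟨hx.1.le, hx.2.le⟩
        have hx0 : x ≠ 0 := ne_of_gt hxpos
        have hD : HasDerivAt (fun s => Real.sqrt s - K * Real.log s)
            (1 / (2 * Real.sqrt x) - K * x⁻¹) x :=
          (Real.hasDerivAt_sqrt hx0).sub ((Real.hasDerivAt_log hx0).const_mul K)
        rw [hD.deriv]
        have hK2 : 4 * K ^ 2 ≤ x := (hfacts x hx.1.le).2.2
        have hsqx : 0 < Real.sqrt x := Real.sqrt_pos.mpr hxpos
        have hsqsq : Real.sqrt x ^ 2 = x := Real.sq_sqrt hxpos.le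
        have h2K : 2 * K ≤ Real.sqrt x := by
          nlinarith [hsqx, hsqsq, hKpos]
        have hKx : K * x⁻¹ = K / x := by ring
        rw [hKx, sub_nonneg, div_le_div_iff₀ hxpos (by positivity)]
        have hmul : 2 * K * Real.sqrt x ≤ Real.sqrt x * Real.sqrt x :=
          mul_le_mul_of_nonneg_right h2K hsqx.le
        have hxx : Real.sqrt x * Real.sqrt x = x := Real.mul_self_sqrt hxpos.le
        linarith
    have hψ := hmono hmems₀ hmemτ hτlt.le
    simp only at hψ
    have habs : |g τ| ≤ K * (Real.log τ - Real.log s₀) := abs_le.mpr ⟨by linarith, hup⟩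
    linarith
  -- conclusions
  intro s hs
  have hgs := main s hs
  have hspos : 0 < s := by have := (hfacts s hs).1; linarith
  have hbs := hbpos s hs
  have hs2 := hsqrt s hs
  have hsqnn : 0 ≤ Real.sqrt s := Real.sqrt_nonneg s
  have hgabs := abs_le.mp hgs
  have hinvlow : c₁ * s - Real.sqrt s ≤ (b s)⁻¹ := by
    have := hgabs.2; simp only [hgdef] at this; linarith
  have hinvhigh : (b s)⁻¹ ≤ c₁ * s + Real.sqrt s := by
    have := hgabs.1; simp only [hgdef] at this; linarith
  refine ⟨?_, ?_, ?_⟩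
  · have heq : -(1 / b s) + c₁ * s = g s := by simp only [hgdef, one_div]; ring
    rw [heq]
    exact hgs
  · rw [div_lt_iff₀ (by positivity)]
    nlinarith [mul_pos hbs (show (0:ℝ) < 2 * c₁ * s - (b s)⁻¹ by nlinarith),
      mul_inv_cancel₀ (ne_of_gt hbs)]
  · rw [lt_div_iff₀ (by positivity)]
    nlinarith [mul_pos hbs (show (0:ℝ) < (b s)⁻¹ - c₁ * s / 2 by nlinarith),
      mul_inv_cancel₀ (ne_of_gt hbs)]
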